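/- Let R be a Noetherian commutative ring that is locally approximately Gorenstein, and let f ∈ R[x₁,…,xₙ] be a polynomial that is Gaussian over R (i.e., c(fg) = c(f)·c(g) for all g ∈ R[x₁,…,xₙ], where c denotes the ideal of R generated by the coefficients). Then c(f) is locally principal. -/

import Mathlib

/-- An Artinian local ring is Gorenstein iff its socle (the annihilator of the maximal
ideal) is one-dimensional over the residue field, i.e. generated by one nonzero element. -/
def IsArtinianGorensteinLocal (A : Type*) [CommRing A] : Prop :=
  IsArtinianRing A ∧ ∃ h : IsLocalRing A, ∃ x : A, x ≠ 0 ∧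
    Submodule.annihilator (@IsLocalRing.maximalIdeal A _ h) = Ideal.span {x}

/-- A Noetherian local ring `(A,m)` is approximately Gorenstein if for every `N` there is
an `m`-primary ideal `I ⊆ m^N` such that `A/I` is Gorenstein. -/
def IsApproximatelyGorenstein (A : Type*) [CommRing A] [IsLocalRing A] : Prop :=
  ∀ N : ℕ, ∃ I : Ideal A, I ≤ IsLocalRing.maximalIdeal A ^ N ∧ I.IsPrimary ∧
    I.radical = IsLocalRing.maximalIdeal A ∧ IsArtinianGorensteinLocal (A ⧸ I)

/-- `R` is locally approximately Gorenstein if each localization at a maximal ideal is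
approximately Gorenstein. -/
def IsLocallyApproximatelyGorenstein (R : Type*) [CommRing R] : Prop :=
  ∀ (m : Ideal R) (_ : m.IsMaximal),
    IsApproximatelyGorenstein (Localization m.primeCompl)

/-- The content of a multivariate polynomial: the ideal of `R` generated by its
coefficients. -/
noncomputable def polyContent {R : Type*} [CommRing R] {n : ℕ}
    (f : MvPolynomial (Fin n) R) : Ideal R :=
  Ideal.span (Set.range fun d => MvPolynomial.coeff d f)

open Submodule IsLocalRing

section Flen

variable (R : Type*) [Ring R]

/-- The (finite) length of a Noetherian & Artinian module, via a choice of composition series. -/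
noncomputable def flen (M : Type*) [AddCommGroup M] [Module R M]
    [IsNoetherian R M] [IsArtinian R M] : ℕ :=
  (exists_compositionSeries_of_isNoetherian_isArtinian R M).choose.length

variable {R}
variable {M : Type*} [AddCommGroup M] [Module R M] [IsNoetherian R M] [IsArtinian R M]

lemma flen_eq (s : CompositionSeries (Submodule R M)) (hb : s.head = ⊥) (hl : s.last = ⊤) :
    s.length = flen R M := by
  obtain ⟨h1, h2⟩ := (exists_compositionSeries_of_isNoetherian_isArtinian R M).choose_spec
  exact (CompositionSeries.jordan_holder s _ (by rw [hb, h1]) (by rw [hl, h2])).length_eq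

lemma isMaximal_iff_covBy (a b : Submodule R M) :
    JordanHolderLattice.IsMaximal a b ↔ a ⋖ b := Iff.rfl

/-- transport of a composition series along a cover-preserving map -/
def csMap {M₂ : Type*} [AddCommGroup M₂] [Module R M₂]
    (s : CompositionSeries (Submodule R M)) (g : Submodule R M → Submodule R M₂)
    (hg : ∀ a b : Submodule R M, a ⋖ b → g a ⋖ g b) : CompositionSeries (Submodule R M₂) :=
  RelSeries.map s ⟨g, fun h => hg _ _ h⟩

lemma csMap_length {M₂ : Type*} [AddCommGroup M₂] [Module R M₂]
    (s : CompositionSeries (Submodule R M)) (g : Submodule R M → Submodule R M₂)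
    (hg : ∀ a b : Submodule R M, a ⋖ b → g a ⋖ g b) : (csMap s g hg).length = s.length := rfl

lemma csMap_head {M₂ : Type*} [AddCommGroup M₂] [Module R M₂]
    (s : CompositionSeries (Submodule R M)) (g : Submodule R M → Submodule R M₂)
    (hg : ∀ a b : Submodule R M, a ⋖ b → g a ⋖ g b) : (csMap s g hg).head = g s.head := rfl

lemma csMap_last {M₂ : Type*} [AddCommGroup M₂] [Module R M₂]
    (s : CompositionSeries (Submodule R M)) (g : Submodule R M → Submodule R M₂)
    (hg : ∀ a b : Submodule R M, a ⋖ b → g a ⋖ g b) : (csMap s g hg).last = g s.last := rfl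

lemma flen_congr {M₂ : Type*} [AddCommGroup M₂] [Module R M₂]
    [IsNoetherian R M₂] [IsArtinian R M₂] (e : M ≃ₗ[R] M₂) : flen R M = flen R M₂ := by
  obtain ⟨h1, h2⟩ := (exists_compositionSeries_of_isNoetherian_isArtinian R M).choose_spec
  set s := (exists_compositionSeries_of_isNoetherian_isArtinian R M).choose
  have := flen_eq (M := M₂) (csMap s (Submodule.orderIsoMapComap e)
      (fun a b hab => (apply_covBy_apply_iff (Submodule.orderIsoMapComap e)).mpr hab))
    (by rw [csMap_head, h1]; exact (Submodule.orderIsoMapComap e).map_bot)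
    (by rw [csMap_last, h2]; exact (Submodule.orderIsoMapComap e).map_top)
  rw [← this, csMap_length]
  exact flen_eq s h1 h2

lemma map_subtype_covBy (N : Submodule R M) (a b : Submodule R ↥N) (hab : a ⋖ b) :
    a.map N.subtype ⋖ b.map N.subtype := by
  have hinj : Function.Injective N.subtype := Subtype.val_injective
  constructor
  · exact lt_of_le_of_ne (Submodule.map_mono hab.1.le)
      (fun h => hab.1.ne (Submodule.map_injective_of_injective hinj h))
  · intro c hc hcb
    have hcN : c ≤ N := le_trans hcb.le (Submodule.map_subtype_le _ _)
    have hc' : Submodule.map N.subtype (Submodule.comap N.subtype c) = c := by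
      rw [Submodule.map_comap_subtype, inf_eq_right.mpr hcN]
    have hle1 : a ≤ Submodule.comap N.subtype c := by
      rw [← Submodule.map_le_map_iff_of_injective hinj, hc']
      exact hc.le
    have hlt1 : a < Submodule.comap N.subtype c :=
      lt_of_le_of_ne hle1 (fun h => hc.ne (by rw [h, hc']))
    have hle2 : Submodule.comap N.subtype c ≤ b := by
      rw [← Submodule.map_le_map_iff_of_injective hinj, hc']
      exact hcb.le
    have hlt2 : Submodule.comap N.subtype c < b :=
      lt_of_le_of_ne hle2 (fun h => hcb.ne (by rw [← hc', h]))
    exact hab.2 hlt1 hlt2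

lemma comap_mkQ_covBy (N : Submodule R M) (a b : Submodule R (M ⧸ N)) (hab : a ⋖ b) :
    a.comap N.mkQ ⋖ b.comap N.mkQ := by
  have hsurj : Function.Surjective N.mkQ := Submodule.mkQ_surjective N
  constructor
  · exact lt_of_le_of_ne (Submodule.comap_mono hab.1.le)
      (fun h => hab.1.ne (Submodule.comap_injective_of_surjective hsurj h))
  · intro c hc hcb
    have hNc : N ≤ c := by
      refine le_trans ?_ hc.le
      intro x hx
      simp only [Submodule.mem_comap, Submodule.mkQ_apply]
      rw [(Submodule.Quotient.mk_eq_zero N).mpr hx]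
      exact zero_mem a
    have hc' : Submodule.comap N.mkQ (Submodule.map N.mkQ c) = c := by
      rw [Submodule.comap_map_mkQ, sup_eq_right.mpr hNc]
    have hle1 : a ≤ Submodule.map N.mkQ c := by
      rw [← Submodule.comap_le_comap_iff_of_surjective hsurj, hc']
      exact hc.le
    have hlt1 : a < Submodule.map N.mkQ c :=
      lt_of_le_of_ne hle1 (fun h => hc.ne (by rw [h, hc']))
    have hle2 : Submodule.map N.mkQ c ≤ b := by
      rw [← Submodule.comap_le_comap_iff_of_surjective hsurj, hc']
      exact hcb.le
    have hlt2 : Submodule.map N.mkQ c < b :=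
      lt_of_le_of_ne hle2 (fun h => hcb.ne (by rw [← hc', h]))
    exact hab.2 hlt1 hlt2

lemma flen_additive (N : Submodule R M) : flen R M = flen R ↥N + flen R (M ⧸ N) := by
  obtain ⟨h1, h2⟩ := (exists_compositionSeries_of_isNoetherian_isArtinian R ↥N).choose_spec
  set s₁ := (exists_compositionSeries_of_isNoetherian_isArtinian R ↥N).choose
  obtain ⟨g1, g2⟩ := (exists_compositionSeries_of_isNoetherian_isArtinian R (M ⧸ N)).choose_spec
  set s₂ := (exists_compositionSeries_of_isNoetherian_isArtinian R (M ⧸ N)).choose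
  set t₁ := csMap s₁ (Submodule.map N.subtype) (map_subtype_covBy N)
  set t₂ := csMap s₂ (Submodule.comap N.mkQ) (comap_mkQ_covBy N)
  have hconn : t₁.last = t₂.head := by
    rw [csMap_last, csMap_head]
    rw [h2, g1, Submodule.map_top, Submodule.range_subtype, Submodule.comap_bot, Submodule.ker_mkQ]
  have hh : (t₁.smash t₂ hconn).head = ⊥ := by
    rw [RelSeries.head_smash, csMap_head, h1, Submodule.map_bot]
  have hl : (t₁.smash t₂ hconn).last = ⊤ := by
    rw [RelSeries.last_smash, csMap_last, g2, Submodule.comap_top]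
  have := flen_eq (t₁.smash t₂ hconn) hh hl
  rw [← this]
  rfl

lemma flen_zero_of_subsingleton (h : Subsingleton M) : flen R M = 0 := by
  have hbt : (⊥ : Submodule R M) = ⊤ := by
    ext x; simp [Subsingleton.elim x 0]
  have := flen_eq (RelSeries.singleton _ (⊥ : Submodule R M)) rfl (by simpa using hbt)
  simpa using this.symm

lemma subsingleton_of_flen_zero (h : flen R M = 0) : Subsingleton M := by
  obtain ⟨h1, h2⟩ := (exists_compositionSeries_of_isNoetherian_isArtinian R M).choose_spec
  set s := (exists_compositionSeries_of_isNoetherian_isArtinian R M).choose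
  have hl : s.length = 0 := flen_eq s h1 h2 ▸ h
  have : s.head = s.last := by
    show s 0 = s (Fin.last _)
    congr 1
    ext
    simp [hl]
  rw [h1, h2] at this
  refine ⟨fun a b => ?_⟩
  have ha : a ∈ (⊥ : Submodule R M) := this ▸ Submodule.mem_top
  have hb : b ∈ (⊥ : Submodule R M) := this ▸ Submodule.mem_top
  simpa using (Submodule.mem_bot R).mp ha |>.trans ((Submodule.mem_bot R).mp hb).symm

lemma flen_simple (h : IsSimpleModule R M) : flen R M = 1 := by
  have hcov : (⊥ : Submodule R M) ⋖ ⊤ := bot_covBy_top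
  have := flen_eq ((RelSeries.singleton _ (⊥ : Submodule R M) : CompositionSeries (Submodule R M)).snoc ⊤ hcov)
    (RelSeries.head_snoc _ _ _) (RelSeries.last_snoc _ _ _)
  rw [← this]; rfl

lemma flen_submodule_le (N : Submodule R M) : flen R ↥N ≤ flen R M := by
  rw [flen_additive N]; omega

lemma flen_quotient_le (N : Submodule R M) : flen R (M ⧸ N) ≤ flen R M := by
  rw [flen_additive N]; omega

lemma flen_strict_mono {N N' : Submodule R M} (h : N < N') : flen R ↥N < flen R ↥N' := by
  have hadd : flen R ↥N' = flen R ↥(Submodule.comap N'.subtype N) + flen R (↥N' ⧸ Submodule.comap N'.subtype N) :=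
    flen_additive _
  rw [flen_congr (Submodule.comapSubtypeEquivOfLe h.le)] at hadd
  have hq : flen R (↥N' ⧸ Submodule.comap N'.subtype N) ≠ 0 := by
    intro h0
    have := subsingleton_of_flen_zero h0
    have htop : Submodule.comap N'.subtype N = ⊤ := (Submodule.Quotient.subsingleton_iff).mp this
    refine h.ne ?_
    refine le_antisymm h.le fun x hx => ?_
    have : (⟨x, hx⟩ : ↥N') ∈ Submodule.comap N'.subtype N := htop ▸ Submodule.mem_top
    exact this
  omega

lemma flen_mono {N N' : Submodule R M} (h : N ≤ N') : flen R ↥N ≤ flen R ↥N' := by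
  rcases eq_or_lt_of_le h with rfl | h
  · exact le_rfl
  · exact (flen_strict_mono h).le

lemma eq_of_le_of_flen_le {N N' : Submodule R M} (h : N ≤ N') (hf : flen R ↥N' ≤ flen R ↥N) :
    N = N' := by
  by_contra hne
  exact absurd hf (not_le.mpr (flen_strict_mono (lt_of_le_of_ne h hne)))

lemma flen_rank_nullity {M₂ : Type*} [AddCommGroup M₂] [Module R M₂] (φ : M →ₗ[R] M₂) :
    flen R M = flen R ↥(LinearMap.ker φ) + flen R ↥(LinearMap.range φ) := by
  rw [flen_additive (LinearMap.ker φ), flen_congr φ.quotKerEquivRange]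

end Flen

section Duality

variable {A : Type*} [CommRing A] [IsNoetherianRing A] [IsArtinianRing A] [IsLocalRing A]

lemma z_ann (z : A) (hz : Submodule.annihilator (IsLocalRing.maximalIdeal A : Ideal A) = Ideal.span {z})
    {c : A} (hc : c ∈ IsLocalRing.maximalIdeal A) : c * z = 0 := by
  have hzmem : z ∈ Submodule.annihilator (IsLocalRing.maximalIdeal A : Ideal A) := by
    rw [hz]; exact Submodule.mem_span_singleton_self z
  have := Submodule.mem_annihilator.mp hzmem c hc
  rw [smul_eq_mul, mul_comm] at this
  exact this

lemma mul_z_zero_iff (z : A) (hz : Submodule.annihilator (IsLocalRing.maximalIdeal A : Ideal A) = Ideal.span {z})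
    (hz0 : z ≠ 0) (c : A) : c * z = 0 ↔ c ∈ IsLocalRing.maximalIdeal A := by
  constructor
  · intro h
    by_contra hcm
    have hu : IsUnit c := by
      by_contra hnu
      exact hcm ((IsLocalRing.mem_maximalIdeal c).mpr hnu)
    obtain ⟨u, rfl⟩ := hu
    apply hz0
    calc z = ↑u⁻¹ * (↑u * z) := by rw [← mul_assoc, Units.inv_mul, one_mul]
    _ = ↑u⁻¹ * 0 := by rw [h]
    _ = 0 := mul_zero _
  · exact z_ann z hz

lemma flen_quot_max : flen A (A ⧸ (IsLocalRing.maximalIdeal A : Ideal A)) = 1 :=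
  flen_simple (isSimpleModule_iff_isCoatom.mpr
    (Ideal.isMaximal_def.mp (IsLocalRing.maximalIdeal.isMaximal A)))

lemma flen_span_z (z : A) (hz : Submodule.annihilator (IsLocalRing.maximalIdeal A : Ideal A) = Ideal.span {z})
    (hz0 : z ≠ 0) : flen A ↥(Ideal.span {z} : Ideal A) = 1 := by
  have htor : Ideal.torsionOf A A z = IsLocalRing.maximalIdeal A := by
    ext c
    rw [Ideal.mem_torsionOf_iff, smul_eq_mul]
    exact mul_z_zero_iff z hz hz0 c
  have e := Ideal.quotTorsionOfEquivSpanSingleton A A z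
  rw [htor] at e
  show flen A ↥(Submodule.span A {z}) = 1
  rw [← flen_congr e, flen_quot_max]

lemma ann_anti {K L : Submodule A A} (h : K ≤ L) :
    Submodule.annihilator L ≤ Submodule.annihilator K :=
  fun a ha => Submodule.mem_annihilator.mpr fun y hy => Submodule.mem_annihilator.mp ha y (h hy)

lemma stepAnn (z : A) (hz : Submodule.annihilator (IsLocalRing.maximalIdeal A : Ideal A) = Ideal.span {z})
    (hz0 : z ≠ 0) (J : Ideal A) (x : A) (hx : ∀ c ∈ IsLocalRing.maximalIdeal A, c * x ∈ J) :
    flen A ↥(Submodule.annihilator (J : Submodule A A)) ≤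
      flen A ↥(Submodule.annihilator ((J ⊔ Ideal.span {x} : Ideal A) : Submodule A A)) + 1 := by
  set K := Submodule.annihilator (J : Submodule A A) with hK
  let φ : ↥(K : Submodule A A) →ₗ[A] A := (LinearMap.mul A A x).comp (Submodule.subtype _)
  have hφ : ∀ b : ↥(K : Submodule A A), φ b = x * (b : A) := fun b => rfl
  have hle : Submodule.annihilator ((J ⊔ Ideal.span {x} : Ideal A) : Submodule A A) ≤ K :=
    ann_anti le_sup_left
  have hker : LinearMap.ker φ = Submodule.comap (Submodule.subtype _)
      (Submodule.annihilator ((J ⊔ Ideal.span {x} : Ideal A) : Submodule A A)) := by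
    ext b
    simp only [LinearMap.mem_ker, Submodule.mem_comap, hφ]
    constructor
    · intro h0
      rw [Submodule.mem_annihilator]
      intro y hy
      obtain ⟨j, hj, w, hw, rfl⟩ := Submodule.mem_sup.mp hy
      obtain ⟨c, rfl⟩ := Ideal.mem_span_singleton'.mp hw
      have h1 : (b : A) * j = 0 := by
        have := Submodule.mem_annihilator.mp b.2 j hj
        rwa [smul_eq_mul] at this
      have h2 : (b : A) • (j + c * x) = 0 := by
        rw [smul_eq_mul, mul_add, h1, zero_add,
          show (b : A) * (c * x) = c * (x * (b : A)) by ring, h0, mul_zero]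
      exact h2
    · intro hmem
      have hx' : x ∈ (J ⊔ Ideal.span {x} : Ideal A) :=
        Submodule.mem_sup_right (Submodule.mem_span_singleton_self x)
      have := Submodule.mem_annihilator.mp hmem x hx'
      rw [smul_eq_mul, mul_comm] at this
      exact this
  have hrange : LinearMap.range φ ≤ (Ideal.span {z} : Ideal A) := by
    rintro w ⟨b, rfl⟩
    rw [← hz]
    rw [Submodule.mem_annihilator]
    intro c hc
    have h1 : (b : A) • (c * x) = 0 := Submodule.mem_annihilator.mp b.2 (c * x) (hx c hc)
    rw [smul_eq_mul] at h1
    rw [hφ, smul_eq_mul]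
    calc x * (b : A) * c = (b : A) * (c * x) := by ring
    _ = 0 := h1
  have h2 : flen A ↥(K : Submodule A A) =
      flen A ↥(LinearMap.ker φ) + flen A ↥(LinearMap.range φ) := flen_rank_nullity φ
  have h3 : flen A ↥(LinearMap.ker φ) =
      flen A ↥(Submodule.annihilator ((J ⊔ Ideal.span {x} : Ideal A) : Submodule A A)) := by
    rw [hker]
    exact flen_congr (Submodule.comapSubtypeEquivOfLe hle)
  have h4 : flen A ↥(LinearMap.range φ) ≤ 1 := by
    calc flen A ↥(LinearMap.range φ) ≤ flen A ↥(Ideal.span {z} : Ideal A) := flen_mono hrange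
    _ = 1 := flen_span_z z hz hz0
  omega

lemma stepQuot (J : Ideal A) (x : A) (hxJ : x ∉ J)
    (hx : ∀ c ∈ IsLocalRing.maximalIdeal A, c * x ∈ J) :
    flen A (A ⧸ J) = flen A (A ⧸ (J ⊔ Ideal.span {x} : Ideal A)) + 1 := by
  set J' : Ideal A := J ⊔ Ideal.span {x} with hJ'
  have hJJ' : (J : Submodule A A) ≤ (J' : Submodule A A) := le_sup_left
  set N : Submodule A (A ⧸ J) := Submodule.map (Submodule.mkQ (J : Submodule A A)) J' with hN
  have e2 := Submodule.quotientQuotientEquivQuotient (J : Submodule A A) J' hJJ'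
  have hmapJ : Submodule.map (Submodule.mkQ (J : Submodule A A)) (J : Submodule A A) = ⊥ := by
    rw [eq_bot_iff]
    rintro w ⟨y, hy, rfl⟩
    simp only [Submodule.mkQ_apply, Submodule.mem_bot]
    exact (Submodule.Quotient.mk_eq_zero _).mpr hy
  have hNspan : N = Submodule.span A {Submodule.mkQ (J : Submodule A A) x} := by
    have his : (Ideal.span {x} : Ideal A) = Submodule.span A {x} := rfl
    rw [hN, hJ', Submodule.map_sup, his, Submodule.map_span, Set.image_singleton, hmapJ, bot_sup_eq]
  have htor : Ideal.torsionOf A (A ⧸ J) (Submodule.mkQ (J : Submodule A A) x) =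
      IsLocalRing.maximalIdeal A := by
    ext c
    rw [Ideal.mem_torsionOf_iff]
    have hmk : c • (Submodule.mkQ (J : Submodule A A) x) =
        Submodule.mkQ (J : Submodule A A) (c * x) := by
      rw [Submodule.mkQ_apply, Submodule.mkQ_apply, ← Submodule.Quotient.mk_smul, smul_eq_mul]
    rw [hmk]
    constructor
    · intro h
      by_contra hcm
      have hu : IsUnit c := by
        by_contra hnu
        exact hcm ((IsLocalRing.mem_maximalIdeal c).mpr hnu)
      apply hxJ
      have hcx : c * x ∈ J := by
        have := (Submodule.Quotient.mk_eq_zero (J : Submodule A A)).mp h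
        exact this
      obtain ⟨u, rfl⟩ := hu
      have := (J : Ideal A).mul_mem_left (↑u⁻¹) hcx
      rwa [← mul_assoc, Units.inv_mul, one_mul] at this
    · intro hc
      exact (Submodule.Quotient.mk_eq_zero _).mpr (hx c hc)
  have hsimpleN : flen A ↥N = 1 := by
    have e3 := Ideal.quotTorsionOfEquivSpanSingleton A (A ⧸ J) (Submodule.mkQ (J : Submodule A A) x)
    rw [htor] at e3
    rw [flen_congr (LinearEquiv.ofEq _ _ hNspan), ← flen_congr e3, flen_quot_max]
  have hadd : flen A (A ⧸ J) = flen A ↥N + flen A ((A ⧸ J) ⧸ N) := flen_additive N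
  rw [flen_congr e2] at hadd
  rw [hadd, hsimpleN]
  omega

lemma annLen (z : A) (hz : Submodule.annihilator (IsLocalRing.maximalIdeal A : Ideal A) = Ideal.span {z})
    (hz0 : z ≠ 0) (J : Ideal A) :
    flen A ↥(Submodule.annihilator (J : Submodule A A)) = flen A (A ⧸ J) := by
  classical
  have hjac : IsLocalRing.maximalIdeal A ≤ Ideal.jacobson ⊥ :=
    le_of_eq (IsLocalRing.jacobson_eq_maximalIdeal ⊥ bot_ne_top).symm
  refine le_antisymm ?_ ?_
  · -- upward Noetherian induction
    induction J using IsNoetherian.induction with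
    | _ J ih =>
      by_cases hJ : J = ⊤
      · subst hJ
        have hann : Submodule.annihilator ((⊤ : Ideal A) : Submodule A A) = ⊥ := by
          rw [eq_bot_iff]
          intro a ha
          have := Submodule.mem_annihilator.mp ha 1 Submodule.mem_top
          rw [smul_eq_mul, mul_one] at this
          simpa using this
        rw [hann]
        have : Subsingleton ↥((⊥ : Ideal A) : Submodule A A) :=
          ⟨fun a b => Subtype.ext (by
            rw [(Submodule.mem_bot A).mp a.2, (Submodule.mem_bot A).mp b.2])⟩
        rw [flen_zero_of_subsingleton this]
        omega
      · obtain ⟨k, hk⟩ := IsArtinianRing.isNilpotent_jacobson_bot (R := A)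
        rw [IsLocalRing.jacobson_eq_maximalIdeal ⊥ bot_ne_top] at hk
        have hex : ∃ j, (IsLocalRing.maximalIdeal A) ^ j ≤ J :=
          ⟨k, by rw [hk, Ideal.zero_eq_bot]; exact bot_le⟩
        have hj0 : Nat.find hex ≠ 0 := by
          intro h0
          have hjspec := Nat.find_spec hex
          rw [h0, pow_zero, Ideal.one_eq_top, top_le_iff] at hjspec
          exact hJ hjspec
        have hnot : ¬ (IsLocalRing.maximalIdeal A) ^ (Nat.find hex - 1) ≤ J :=
          Nat.find_min hex (by omega)
        obtain ⟨x, hxm, hxJ⟩ := SetLike.not_le_iff_exists.mp hnot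
        have hx : ∀ c ∈ IsLocalRing.maximalIdeal A, c * x ∈ J := by
          intro c hc
          refine Nat.find_spec hex ?_
          have h1 : c * x ∈ (IsLocalRing.maximalIdeal A) *
              (IsLocalRing.maximalIdeal A) ^ (Nat.find hex - 1) :=
            Ideal.mul_mem_mul hc hxm
          rw [← pow_succ'] at h1
          have heq : Nat.find hex - 1 + 1 = Nat.find hex := by omega
          rwa [heq] at h1
        have hJlt : J < J ⊔ Ideal.span {x} := by
          refine lt_of_le_of_ne le_sup_left fun h => hxJ ?_
          rw [h]
          exact Submodule.mem_sup_right (Submodule.mem_span_singleton_self x)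
        have h1 := stepAnn z hz hz0 J x hx
        have h2 := stepQuot J x hxJ hx
        have h3 := ih _ hJlt
        omega
  · -- downward Artinian induction
    induction J using IsArtinian.induction with
    | _ J ih =>
      by_cases hJ : J = ⊥
      · subst hJ
        rw [Submodule.annihilator_bot]
        rw [flen_congr (Submodule.quotEquivOfEqBot (⊥ : Submodule A A) rfl)]
        rw [flen_congr (Submodule.topEquiv (R := A) (M := A))]
      · have hwf : WellFounded ((· > ·) : Submodule A A → Submodule A A → Prop) := IsWellFounded.wf
        obtain ⟨J₀, hJ₀S, hJ₀max⟩ := hwf.has_min {K | K < J} ⟨⊥, Ne.bot_lt hJ⟩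
        have hmax : ∀ K : Ideal A, J₀ < K → K ≤ J → K = J := by
          intro K h1 h2
          by_contra hne
          exact hJ₀max K (lt_of_le_of_ne h2 hne) h1
        have hmJ : (IsLocalRing.maximalIdeal A) • (J : Submodule A A) ≤ J₀ := by
          by_contra hc
          have h1 : J₀ < J₀ ⊔ (IsLocalRing.maximalIdeal A) • (J : Submodule A A) :=
            lt_of_le_of_ne le_sup_left (fun h => hc (by rw [h]; exact le_sup_right))
          have h2 : J₀ ⊔ (IsLocalRing.maximalIdeal A) • (J : Submodule A A) ≤ J :=
            sup_le hJ₀S.le Submodule.smul_le_right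
          have h3 := hmax _ h1 h2
          have h4 : (J : Submodule A A) ≤ J₀ :=
            Submodule.le_of_le_smul_of_le_jacobson_bot (IsNoetherian.noetherian _) hjac
              (by rw [h3])
          exact absurd h4 (show J₀ < J from hJ₀S).not_ge
        obtain ⟨x, hxJ, hxJ₀⟩ := SetLike.exists_of_lt (show J₀ < J from hJ₀S)
        have hJeq : J₀ ⊔ Ideal.span {x} = J := by
          refine hmax _ ?_ (sup_le hJ₀S.le ((Submodule.span_le).mpr (by simpa using hxJ)))
          refine lt_of_le_of_ne le_sup_left fun h => hxJ₀ ?_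
          rw [h]
          exact Submodule.mem_sup_right (Submodule.mem_span_singleton_self x)
        have hx : ∀ c ∈ IsLocalRing.maximalIdeal A, c * x ∈ J₀ := by
          intro c hc
          have := Submodule.smul_mem_smul hc hxJ
          rw [smul_eq_mul] at this
          exact hmJ this
        have h1 := stepQuot J₀ x hxJ₀ hx
        have h2 := stepAnn z hz hz0 J₀ x hx
        have h3 := ih J₀ hJ₀S
        rw [hJeq] at h1 h2
        omega

lemma ann_strict (z : A) (hz : Submodule.annihilator (IsLocalRing.maximalIdeal A : Ideal A) = Ideal.span {z})
    (hz0 : z ≠ 0) {K L : Ideal A} (h : K < L) :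
    Submodule.annihilator (L : Submodule A A) < Submodule.annihilator (K : Submodule A A) := by
  refine lt_of_le_of_ne (ann_anti h.le) fun heq => ?_
  have h1 := annLen z hz hz0 K
  have h2 := annLen z hz hz0 L
  have hadd : flen A (A ⧸ K) =
      flen A ↥(Submodule.map (Submodule.mkQ (K : Submodule A A)) L) + flen A (A ⧸ L) := by
    rw [flen_additive (Submodule.map (Submodule.mkQ (K : Submodule A A)) L),
      flen_congr (Submodule.quotientQuotientEquivQuotient (K : Submodule A A) L h.le)]
  have hflen0 : flen A ↥(Submodule.map (Submodule.mkQ (K : Submodule A A)) L) = 0 := by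
    rw [heq] at h2
    omega
  have hsub := subsingleton_of_flen_zero hflen0
  refine absurd (fun y hy => ?_) h.not_ge
  have hmem : Submodule.mkQ (K : Submodule A A) y ∈
      Submodule.map (Submodule.mkQ (K : Submodule A A)) L := ⟨y, hy, rfl⟩
  have h0 : Submodule.mkQ (K : Submodule A A) y = 0 := by
    have := Subsingleton.elim (α := ↥(Submodule.map (Submodule.mkQ (K : Submodule A A)) L))
      ⟨_, hmem⟩ ⟨0, zero_mem _⟩
    exact congrArg Subtype.val this
  rw [Submodule.mkQ_apply] at h0
  exact (Submodule.Quotient.mk_eq_zero _).mp h0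

lemma le_ann_ann (J : Submodule A A) :
    J ≤ Submodule.annihilator ((Submodule.annihilator J : Ideal A) : Submodule A A) := by
  intro x hx
  rw [Submodule.mem_annihilator]
  intro b hb
  have := Submodule.mem_annihilator.mp hb x hx
  rw [smul_eq_mul] at this ⊢
  rw [mul_comm]
  exact this

lemma ann_ann (z : A) (hz : Submodule.annihilator (IsLocalRing.maximalIdeal A : Ideal A) = Ideal.span {z})
    (hz0 : z ≠ 0) (J : Ideal A) :
    Submodule.annihilator ((Submodule.annihilator (J : Submodule A A) : Ideal A) : Submodule A A) = J := by
  by_contra hne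
  have hlt : J < Submodule.annihilator ((Submodule.annihilator (J : Submodule A A) : Ideal A) : Submodule A A) :=
    lt_of_le_of_ne (le_ann_ann J) (fun h => hne h.symm)
  have h1 := ann_strict z hz hz0 hlt
  have h2 : Submodule.annihilator
      ((Submodule.annihilator ((Submodule.annihilator (J : Submodule A A) : Ideal A) : Submodule A A) : Ideal A) : Submodule A A) =
      Submodule.annihilator (J : Submodule A A) :=
    le_antisymm (ann_anti (le_ann_ann J)) (le_ann_ann _)
  exact h1.ne h2

end Duality

section Content

open MvPolynomial

variable {R S : Type*} [CommRing R] [CommRing S] {n : ℕ}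

lemma coeff_mem_polyContent (f : MvPolynomial (Fin n) R) (d : Fin n →₀ ℕ) :
    MvPolynomial.coeff d f ∈ polyContent f :=
  Ideal.subset_span ⟨d, rfl⟩

lemma polyContent_le_iff {f : MvPolynomial (Fin n) R} {I : Ideal R} :
    polyContent f ≤ I ↔ ∀ d, MvPolynomial.coeff d f ∈ I := by
  rw [polyContent, Ideal.span_le]
  constructor
  · intro h d; exact h ⟨d, rfl⟩
  · rintro h y ⟨d, rfl⟩; exact h d

lemma polyContent_zero : polyContent (0 : MvPolynomial (Fin n) R) = ⊥ := by
  rw [eq_bot_iff, polyContent_le_iff]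
  intro d
  simp

lemma mem_ann_span {s : Set R} {b : R} (h : ∀ x ∈ s, b * x = 0) :
    b ∈ Submodule.annihilator ((Ideal.span s : Ideal R) : Submodule R R) := by
  rw [Submodule.mem_annihilator]
  intro y hy
  rw [smul_eq_mul]
  induction hy using Submodule.span_induction with
  | mem x hx => exact h x hx
  | zero => exact mul_zero b
  | add x y _ _ hx hy => rw [mul_add, hx, hy, add_zero]
  | smul c x _ hx => rw [smul_eq_mul, ← mul_assoc, mul_comm b c, mul_assoc, hx, mul_zero]

lemma smul_poly_eq_zero_iff (f : MvPolynomial (Fin n) R) (b : R) :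
    b • f = 0 ↔ b ∈ Submodule.annihilator ((polyContent f : Ideal R) : Submodule R R) := by
  constructor
  · intro h
    refine mem_ann_span ?_
    rintro x ⟨d, rfl⟩
    have h2 := congrArg (MvPolynomial.coeff d) h
    rw [MvPolynomial.coeff_smul, MvPolynomial.coeff_zero, smul_eq_mul] at h2
    exact h2
  · intro h
    apply MvPolynomial.ext
    intro d
    have h2 := Submodule.mem_annihilator.mp h (MvPolynomial.coeff d f) (coeff_mem_polyContent f d)
    rw [smul_eq_mul] at h2
    rw [MvPolynomial.coeff_smul, MvPolynomial.coeff_zero, smul_eq_mul]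
    exact h2

lemma polyContent_map (φ : R →+* S) (f : MvPolynomial (Fin n) R) :
    polyContent (MvPolynomial.map φ f) = Ideal.map φ (polyContent f) := by
  rw [polyContent, polyContent, Ideal.map_span]
  congr 1
  ext y
  constructor
  · rintro ⟨d, rfl⟩
    exact ⟨MvPolynomial.coeff d f, ⟨d, rfl⟩, (MvPolynomial.coeff_map φ f d).symm⟩
  · rintro ⟨x, ⟨d, rfl⟩, rfl⟩
    exact ⟨d, MvPolynomial.coeff_map φ f d⟩

lemma polyContent_C_unit_mul {u : R} (hu : IsUnit u) (g : MvPolynomial (Fin n) R) :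
    polyContent (MvPolynomial.C u * g) = polyContent g := by
  apply le_antisymm
  · rw [polyContent_le_iff]
    intro d
    rw [MvPolynomial.coeff_C_mul]
    exact Ideal.mul_mem_left _ u (coeff_mem_polyContent g d)
  · rw [polyContent_le_iff]
    intro d
    obtain ⟨v, rfl⟩ := hu
    have h : MvPolynomial.coeff d g = ↑v⁻¹ * MvPolynomial.coeff d (MvPolynomial.C (↑v : R) * g) := by
      rw [MvPolynomial.coeff_C_mul, ← mul_assoc, Units.inv_mul, one_mul]
    rw [h]
    exact Ideal.mul_mem_left _ _ (coeff_mem_polyContent _ d)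

lemma gaussian_map_surj (φ : R →+* S) (hφ : Function.Surjective φ) (f : MvPolynomial (Fin n) R)
    (hf : ∀ g, polyContent (f * g) = polyContent f * polyContent g) :
    ∀ g : MvPolynomial (Fin n) S, polyContent (MvPolynomial.map φ f * g) =
      polyContent (MvPolynomial.map φ f) * polyContent g := by
  intro g
  obtain ⟨g₀, rfl⟩ := MvPolynomial.map_surjective φ hφ g
  rw [← map_mul, polyContent_map, polyContent_map, polyContent_map, hf, Ideal.map_mul]

lemma gaussian_map_loc (M : Submonoid R) (S : Type*) [CommRing S] [Algebra R S]
    [IsLocalization M S] (f : MvPolynomial (Fin n) R)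
    (hf : ∀ g, polyContent (f * g) = polyContent f * polyContent g) :
    ∀ g : MvPolynomial (Fin n) S, polyContent (MvPolynomial.map (algebraMap R S) f * g) =
      polyContent (MvPolynomial.map (algebraMap R S) f) * polyContent g := by
  classical
  intro g
  obtain ⟨b, hb⟩ := IsLocalization.exist_integer_multiples_of_finset M
    (g.support.image fun d => MvPolynomial.coeff d g)
  have hb' : ∀ d ∈ g.support, ∃ r : R, algebraMap R S r = (b : R) • MvPolynomial.coeff d g := by
    intro d hd
    exact hb _ (Finset.mem_image_of_mem _ hd)
  choose! r hr using hb'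
  set g₀ : MvPolynomial (Fin n) R := ∑ d ∈ g.support, MvPolynomial.monomial d (r d) with hg₀
  have key : MvPolynomial.map (algebraMap R S) g₀ = MvPolynomial.C (algebraMap R S (b : R)) * g := by
    apply MvPolynomial.ext
    intro e
    rw [MvPolynomial.coeff_map, MvPolynomial.coeff_C_mul, hg₀]
    rw [MvPolynomial.coeff_sum]
    simp only [MvPolynomial.coeff_monomial]
    rw [Finset.sum_ite_eq' g.support e r]
    by_cases he : e ∈ g.support
    · rw [if_pos he, hr e he, Algebra.smul_def]
    · rw [if_neg he, MvPolynomial.notMem_support_iff.mp he, mul_zero, map_zero]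
  have hunit : IsUnit (algebraMap R S (b : R)) := IsLocalization.map_units S b
  calc polyContent (MvPolynomial.map (algebraMap R S) f * g)
      = polyContent (MvPolynomial.C (algebraMap R S (b : R)) *
          (MvPolynomial.map (algebraMap R S) f * g)) := (polyContent_C_unit_mul hunit _).symm
    _ = polyContent (MvPolynomial.map (algebraMap R S) f *
          (MvPolynomial.C (algebraMap R S (b : R)) * g)) := by rw [mul_left_comm]
    _ = polyContent (MvPolynomial.map (algebraMap R S) f * MvPolynomial.map (algebraMap R S) g₀) := by
          rw [key]
    _ = polyContent (MvPolynomial.map (algebraMap R S) (f * g₀)) := by rw [map_mul]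
    _ = Ideal.map (algebraMap R S) (polyContent f * polyContent g₀) := by
          rw [polyContent_map, hf]
    _ = polyContent (MvPolynomial.map (algebraMap R S) f) *
          polyContent (MvPolynomial.map (algebraMap R S) g₀) := by
          rw [Ideal.map_mul, polyContent_map, polyContent_map]
    _ = polyContent (MvPolynomial.map (algebraMap R S) f) * polyContent g := by
          rw [key, polyContent_C_unit_mul hunit]

lemma socle_factor (z : R) (p : MvPolynomial (Fin n) R)
    (h : ∀ d, MvPolynomial.coeff d p ∈ Ideal.span {z}) : ∃ q, p = z • q := by
  classical
  choose c hc using fun d => Ideal.mem_span_singleton'.mp (h d)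
  refine ⟨∑ d ∈ p.support, MvPolynomial.monomial d (c d), ?_⟩
  apply MvPolynomial.ext
  intro e
  rw [MvPolynomial.coeff_smul, MvPolynomial.coeff_sum]
  simp only [MvPolynomial.coeff_monomial]
  rw [Finset.sum_ite_eq' p.support e c]
  by_cases he : e ∈ p.support
  · rw [if_pos he, smul_eq_mul, mul_comm]
    exact (hc e).symm
  · rw [if_neg he, smul_eq_mul, mul_zero]
    exact MvPolynomial.notMem_support_iff.mp he

end Content

section MainArtinian

variable {A : Type*} [CommRing A] [IsNoetherianRing A] [IsArtinianRing A] [IsLocalRing A]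

lemma mem_ann_span_singleton (x b : A) :
    b ∈ Submodule.annihilator ((Ideal.span {x} : Ideal A) : Submodule A A) ↔ b * x = 0 := by
  have h := Submodule.mem_annihilator_span_singleton (R := A) (M := A) x b
  rw [smul_eq_mul] at h
  exact h

lemma ann_sup (K L : Submodule A A) :
    Submodule.annihilator (K ⊔ L) = Submodule.annihilator K ⊓ Submodule.annihilator L := by
  ext a
  simp only [Submodule.mem_inf, Submodule.mem_annihilator]
  constructor
  · intro h
    exact ⟨fun y hy => h y (Submodule.mem_sup_left hy), fun y hy => h y (Submodule.mem_sup_right hy)⟩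
  · rintro ⟨h1, h2⟩ y hy
    obtain ⟨u, hu, v, hv, rfl⟩ := Submodule.mem_sup.mp hy
    rw [smul_add, h1 u hu, h2 v hv, add_zero]

theorem content_principal_of_gaussian_artinian (z : A)
    (hz : Submodule.annihilator (IsLocalRing.maximalIdeal A : Ideal A) = Ideal.span {z})
    (hz0 : z ≠ 0) {n : ℕ} (f : MvPolynomial (Fin n) A)
    (hf : ∀ g, polyContent (f * g) = polyContent f * polyContent g) :
    (polyContent f).IsPrincipal := by
  classical
  set I := polyContent f with hI
  set m := IsLocalRing.maximalIdeal A with hm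
  have hjac : m ≤ Ideal.jacobson ⊥ :=
    le_of_eq (IsLocalRing.jacobson_eq_maximalIdeal ⊥ bot_ne_top).symm
  by_cases hI0 : I = ⊥
  · exact ⟨⟨0, by rw [hI0]; exact (Submodule.span_zero_singleton A).symm⟩⟩
  by_cases hmI : m * I = I
  · exact absurd (Submodule.eq_bot_of_le_smul_of_le_jacobson_bot m (I : Submodule A A)
      (IsNoetherian.noetherian _) (by rw [Ideal.smul_eq_mul, hmI]) hjac) hI0
  have hmIlt : m * I < I := lt_of_le_of_ne Ideal.mul_le_right hmI
  set B := Submodule.annihilator ((m * I : Ideal A) : Submodule A A) with hB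
  set C := Submodule.annihilator ((I : Ideal A) : Submodule A A) with hC
  have hCB : C < B := ann_strict z hz hz0 hmIlt
  obtain ⟨b₁, hb₁B, hb₁C⟩ := SetLike.exists_of_lt hCB
  have hgenz : ∀ b ∈ B, ∀ a ∈ I, a * b ∈ Ideal.span {z} := by
    intro b hb a ha
    rw [← hz, Submodule.mem_annihilator]
    intro c hc
    have hcmI : c * a ∈ m * I := Ideal.mul_mem_mul hc ha
    have h2 := Submodule.mem_annihilator.mp hb _ hcmI
    rw [smul_eq_mul] at h2
    rw [smul_eq_mul]
    calc a * b * c = b * (c * a) := by ring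
    _ = 0 := h2
  have socle_coeffs : ∀ b ∈ B, ∀ d, MvPolynomial.coeff d (b • f) ∈ Ideal.span {z} := by
    intro b hb d
    rw [MvPolynomial.coeff_smul, smul_eq_mul, mul_comm]
    exact hgenz b hb _ (coeff_mem_polyContent f d)
  obtain ⟨h₁, hh₁⟩ := socle_factor z (b₁ • f) (socle_coeffs b₁ hb₁B)
  by_cases hD : B ≤ C ⊔ Ideal.span {b₁}
  · -- the principal case
    have hb₁B' : b₁ ∈ Ideal.span {b₁} := Ideal.mem_span_singleton_self b₁
    have hBD : B = C ⊔ Ideal.span {b₁} :=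
      le_antisymm hD (sup_le hCB.le ((Ideal.span_le).mpr (by simpa using hb₁B)))
    have hannB : Submodule.annihilator ((B : Ideal A) : Submodule A A) = m * I := by
      rw [hB]; exact ann_ann z hz hz0 _
    have hannC : Submodule.annihilator ((C : Ideal A) : Submodule A A) = I := by
      rw [hC]; exact ann_ann z hz hz0 _
    have hkey : (m * I : Ideal A) =
        I ⊓ Submodule.annihilator ((Ideal.span {b₁} : Ideal A) : Submodule A A) := by
      rw [← hannB]
      conv_lhs => rw [hBD]
      rw [ann_sup, hannC]
    obtain ⟨a, haI, ham⟩ := SetLike.exists_of_lt hmIlt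
    obtain ⟨c, hcz⟩ := Ideal.mem_span_singleton'.mp (hgenz b₁ hb₁B a haI)
    have hab0 : a * b₁ ≠ 0 := by
      intro h0
      apply ham
      rw [hkey]
      refine ⟨haI, ?_⟩
      exact (mem_ann_span_singleton b₁ a).mpr h0
    have hcunit : IsUnit c := by
      by_contra hcu
      refine hab0 ?_
      rw [← hcz, z_ann z hz ((IsLocalRing.mem_maximalIdeal c).mpr hcu)]
    have hstep : I ≤ Ideal.span {a} ⊔ m * I := by
      intro a' ha'
      obtain ⟨c', hc'z⟩ := Ideal.mem_span_singleton'.mp (hgenz b₁ hb₁B a' ha')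
      have hdiff : (c * a' - c' * a) * b₁ = 0 := by
        calc (c * a' - c' * a) * b₁ = c * (a' * b₁) - c' * (a * b₁) := by ring
        _ = c * (c' * z) - c' * (c * z) := by rw [hc'z, hcz]
        _ = 0 := by ring
      have hdmem : c * a' - c' * a ∈ m * I := by
        rw [hkey]
        refine ⟨sub_mem (Ideal.mul_mem_left _ _ ha') (Ideal.mul_mem_left _ _ haI), ?_⟩
        exact (mem_ann_span_singleton b₁ _).mpr hdiff
      obtain ⟨u, rfl⟩ := hcunit
      have ha'eq : a' = ↑u⁻¹ * (c' * a + (↑u * a' - c' * a)) := by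
        calc a' = ↑u⁻¹ * (↑u * a') := by rw [← mul_assoc, Units.inv_mul, one_mul]
        _ = ↑u⁻¹ * (c' * a + (↑u * a' - c' * a)) := by ring_nf
      rw [ha'eq]
      have hx : c' * a ∈ (Ideal.span {a} ⊔ m * I : Ideal A) :=
        Submodule.mem_sup_left (Ideal.mul_mem_left _ _ (Ideal.mem_span_singleton_self a))
      have hy : ↑u * a' - c' * a ∈ (Ideal.span {a} ⊔ m * I : Ideal A) :=
        Submodule.mem_sup_right hdmem
      exact Ideal.mul_mem_left _ _ (Submodule.add_mem _ hx hy)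
    have hfin : I ≤ Ideal.span {a} := by
      refine Submodule.le_of_le_smul_of_le_jacobson_bot (IsNoetherian.noetherian _) hjac ?_
      intro t ht
      have := hstep ht
      rwa [Ideal.smul_eq_mul]
    exact ⟨⟨a, le_antisymm hfin ((Ideal.span_le).mpr (by simpa using haI))⟩⟩
  · -- the contradiction case
    obtain ⟨b₂, hb₂B, hb₂D⟩ := SetLike.not_le_iff_exists.mp hD
    obtain ⟨h₂, hh₂⟩ := socle_factor z (b₂ • f) (socle_coeffs b₂ hb₂B)
    set g := MvPolynomial.C b₁ * h₂ - MvPolynomial.C b₂ * h₁ with hg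
    have e1 : f * (MvPolynomial.C b₁ * h₂) = z • (h₁ * h₂) := by
      rw [mul_left_comm, MvPolynomial.C_mul', ← smul_mul_assoc, hh₁, smul_mul_assoc]
    have e2 : f * (MvPolynomial.C b₂ * h₁) = z • (h₂ * h₁) := by
      rw [mul_left_comm, MvPolynomial.C_mul', ← smul_mul_assoc, hh₂, smul_mul_assoc]
    have hfg : f * g = 0 := by
      rw [hg, mul_sub, e1, e2, mul_comm h₂ h₁, sub_self]
    have hzero : I * polyContent g = ⊥ := by rw [← hf g, hfg, polyContent_zero]
    have hallC : ∀ d, MvPolynomial.coeff d g ∈ C := by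
      intro d
      rw [hC, Submodule.mem_annihilator]
      intro y hy
      have h3 : y * MvPolynomial.coeff d g ∈ I * polyContent g :=
        Ideal.mul_mem_mul hy (coeff_mem_polyContent g d)
      rw [hzero, Submodule.mem_bot] at h3
      rw [smul_eq_mul, mul_comm]
      exact h3
    have hbf1 : b₁ • f ≠ 0 := fun h0 => hb₁C ((smul_poly_eq_zero_iff f b₁).mp h0)
    obtain ⟨d₀, hd₀⟩ : ∃ d, MvPolynomial.coeff d (b₁ • f) ≠ 0 := by
      by_contra hall
      push_neg at hall
      exact hbf1 (MvPolynomial.ext _ _ (fun d => by rw [hall d, MvPolynomial.coeff_zero]))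
    have hu : IsUnit (MvPolynomial.coeff d₀ h₁) := by
      rw [hh₁, MvPolynomial.coeff_smul, smul_eq_mul] at hd₀
      by_contra hnu
      refine hd₀ ?_
      rw [mul_comm]
      exact (mul_z_zero_iff z hz hz0 _).mpr ((IsLocalRing.mem_maximalIdeal _).mpr hnu)
    have hcd : MvPolynomial.coeff d₀ g =
        b₁ * MvPolynomial.coeff d₀ h₂ - b₂ * MvPolynomial.coeff d₀ h₁ := by
      rw [hg, MvPolynomial.coeff_sub, MvPolynomial.coeff_C_mul, MvPolynomial.coeff_C_mul]
    obtain ⟨u, huu⟩ := hu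
    have h1 : b₂ * MvPolynomial.coeff d₀ h₁ =
        b₁ * MvPolynomial.coeff d₀ h₂ - MvPolynomial.coeff d₀ g := by
      rw [hcd]; ring
    have h2 : b₂ = ↑u⁻¹ * (b₁ * MvPolynomial.coeff d₀ h₂ - MvPolynomial.coeff d₀ g) := by
      calc b₂ = ↑u⁻¹ * (b₂ * ↑u) := by rw [mul_comm b₂, ← mul_assoc, Units.inv_mul, one_mul]
      _ = ↑u⁻¹ * (b₂ * MvPolynomial.coeff d₀ h₁) := by rw [huu]
      _ = _ := by rw [h1]
    refine absurd ?_ hb₂D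
    rw [h2]
    refine Ideal.mul_mem_left _ _ (Submodule.sub_mem _ ?_ ?_)
    · exact Submodule.mem_sup_right (Ideal.mul_mem_right _ _ (Ideal.mem_span_singleton_self b₁))
    · exact Submodule.mem_sup_left (hallC d₀)

end MainArtinian

section Glue

theorem content_principal_of_gaussian_approxGor {A : Type*} [CommRing A] [IsNoetherianRing A]
    [IsLocalRing A] (hag : IsApproximatelyGorenstein A) {n : ℕ} (f : MvPolynomial (Fin n) A)
    (hf : ∀ g, polyContent (f * g) = polyContent f * polyContent g) :
    (polyContent f).IsPrincipal := by
  classical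
  set I := polyContent f with hI
  set m := IsLocalRing.maximalIdeal A with hm
  have hjac : m ≤ Ideal.jacobson ⊥ :=
    le_of_eq (IsLocalRing.jacobson_eq_maximalIdeal ⊥ bot_ne_top).symm
  obtain ⟨k, hk⟩ := Ideal.exists_pow_inf_eq_pow_smul m (I : Submodule A A)
  obtain ⟨K, hKle, _, _, hGor⟩ := hag (k + 1)
  obtain ⟨hart, hloc, x, hx0, hxann⟩ := hGor
  letI := hloc
  haveI : IsArtinianRing (A ⧸ K) := hart
  have hsurj : Function.Surjective (Ideal.Quotient.mk K) := Ideal.Quotient.mk_surjective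
  have hfbar := gaussian_map_surj (Ideal.Quotient.mk K) hsurj f hf
  have hprin : (polyContent (MvPolynomial.map (Ideal.Quotient.mk K) f)).IsPrincipal :=
    content_principal_of_gaussian_artinian x hxann hx0 _ hfbar
  obtain ⟨y, hy⟩ := hprin
  obtain ⟨a, rfl⟩ := hsurj y
  have hmapI : Ideal.map (Ideal.Quotient.mk K) I = Ideal.span {Ideal.Quotient.mk K a} := by
    rw [← polyContent_map]; exact hy
  have hspan : Ideal.map (Ideal.Quotient.mk K) (Ideal.span {a}) =
      Ideal.span {Ideal.Quotient.mk K a} := by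
    rw [Ideal.map_span, Set.image_singleton]
  have hIK : I ⊔ K = Ideal.span {a} ⊔ K := by
    have h1 := congrArg (Ideal.comap (Ideal.Quotient.mk K)) (hmapI.trans hspan.symm)
    rw [Ideal.comap_map_of_surjective _ hsurj, Ideal.comap_map_of_surjective _ hsurj] at h1
    have hker : Ideal.comap (Ideal.Quotient.mk K) ⊥ = K := by
      rw [← RingHom.ker_eq_comap_bot, Ideal.mk_ker]
    rwa [hker] at h1
  have haIK : a ∈ I ⊔ K := by
    rw [hIK]; exact Submodule.mem_sup_left (Ideal.mem_span_singleton_self a)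
  obtain ⟨a', ha'I, w, hwK, hw⟩ := Submodule.mem_sup.mp haIK
  have hIle : I ≤ Ideal.span {a'} ⊔ m ^ (k + 1) := by
    intro t ht
    have h1 : t ∈ I ⊔ K := Submodule.mem_sup_left ht
    rw [hIK] at h1
    obtain ⟨p, hp, q, hq, hpq⟩ := Submodule.mem_sup.mp h1
    obtain ⟨r, hr⟩ := Ideal.mem_span_singleton'.mp hp
    refine Submodule.mem_sup.mpr ⟨r * a', ?_, r * w + q, ?_, ?_⟩
    · exact Ideal.mul_mem_left _ r (Ideal.mem_span_singleton_self a')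
    · exact add_mem (Ideal.mul_mem_left _ r (hKle hwK)) (hKle hq)
    · calc r * a' + (r * w + q) = r * (a' + w) + q := by ring
      _ = t := by rw [hw, hr, hpq]
  have hIle2 : I ≤ Ideal.span {a'} ⊔ m • (I : Submodule A A) := by
    intro t ht
    obtain ⟨p, hp, q, hq, hpq⟩ := Submodule.mem_sup.mp (hIle ht)
    have hpI : p ∈ I := by
      have : Ideal.span {a'} ≤ I := (Ideal.span_le).mpr (by simpa using ha'I)
      exact this hp
    have hqI : q ∈ (I : Submodule A A) := by
      have hq' : q = t - p := by rw [← hpq]; ring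
      rw [hq']
      exact sub_mem ht hpI
    have hqmem : q ∈ (m ^ (k + 1) • (⊤ : Submodule A A) ⊓ (I : Submodule A A)) := by
      refine ⟨?_, hqI⟩
      rw [Ideal.smul_eq_mul, Ideal.mul_top]
      exact hq
    rw [hk (k + 1) (by omega)] at hqmem
    have hqfin : q ∈ m • (I : Submodule A A) := by
      have h2 : m ^ (k + 1 - k) • (m ^ k • (⊤ : Submodule A A) ⊓ (I : Submodule A A)) ≤
          m • (I : Submodule A A) := by
        have h3 : k + 1 - k = 1 := by omega
        rw [h3, pow_one]
        exact smul_mono_right _ inf_le_right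
      exact h2 hqmem
    exact Submodule.mem_sup.mpr ⟨p, hp, q, hqfin, hpq⟩
  have hfin : I ≤ Ideal.span {a'} :=
    Submodule.le_of_le_smul_of_le_jacobson_bot (IsNoetherian.noetherian _) hjac hIle2
  exact ⟨⟨a', le_antisymm hfin ((Ideal.span_le).mpr (by simpa using ha'I))⟩⟩

end Glue

/-- Let `R` be Noetherian and locally approximately Gorenstein.  If
`f ∈ R[x₁,…,xₙ]` is Gaussian over `R`, then `c(f)` is locally principal. -/
theorem locally_principal_content_of_gaussian_poly (R : Type*) [CommRing R]
    [IsNoetherianRing R] (hag : IsLocallyApproximatelyGorenstein R) (n : ℕ)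
    (f : MvPolynomial (Fin n) R)
    (hf : ∀ g : MvPolynomial (Fin n) R,
      polyContent (f * g) = polyContent f * polyContent g) :
    ∀ (m : Ideal R) (_ : m.IsMaximal),
      (Ideal.map (algebraMap R (Localization m.primeCompl)) (polyContent f)).IsPrincipal := by
  intro m hm
  haveI := hm.isPrime
  haveI : IsNoetherianRing (Localization m.primeCompl) :=
    IsLocalization.isNoetherianRing m.primeCompl (Localization m.primeCompl) inferInstance
  have hfA := gaussian_map_loc m.primeCompl (Localization m.primeCompl) f hf
  have hres := content_principal_of_gaussian_approxGor (hag m hm) _ hfA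
  rwa [polyContent_map] at hres
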